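/- For the first-order virial EOS, the Mayer-type relation C_p = C_v + R(1+aρ)²/(1+2aρ) holds, where C_p = (∂h/∂T)_P with h(P,T) = C_v·T + 2aP/(−1+√(1+4aP/(RT))) + q, evaluated at ρ given by ρ = (−1+√(1+4aP/(RT)))/(2a). -/

import Mathlib

/-- Mayer-type relation for VO1 EOS: C_p = C_v + R(1+aρ)²/(1+2aρ). -/
theorem vo1_mayer (a R Cv q : ℝ) (ha : 0 < a) (hR : 0 < R) (hCv : 0 < Cv)
    (P T ρ : ℝ) (hP : 0 < P) (hT : 0 < T) (hρ : 0 < ρ)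
    (hEOS : P = ρ * R * T * (1 + a * ρ)) :
    deriv (fun T' : ℝ =>
        Cv * T' + 2 * a * P / (-1 + Real.sqrt (1 + 4 * a * P / (R * T'))) + q) T
      = Cv + R * (1 + a * ρ) ^ 2 / (1 + 2 * a * ρ) := by
  have hRT : R * T ≠ 0 := by positivity
  have hw : 1 + 4 * a * P / (R * T) = (1 + 2 * a * ρ) ^ 2 := by
    rw [hEOS]; field_simp; ring
  have hsq : Real.sqrt (1 + 4 * a * P / (R * T)) = 1 + 2 * a * ρ := by
    rw [hw]; exact Real.sqrt_sq (by positivity)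
  have hSne : (1 : ℝ) + 4 * a * P / (R * T) ≠ 0 := by
    rw [hw]; positivity
  have hden : -1 + Real.sqrt (1 + 4 * a * P / (R * T)) = 2 * a * ρ := by
    rw [hsq]; ring
  have hdne : -1 + Real.sqrt (1 + 4 * a * P / (R * T)) ≠ 0 := by
    rw [hden]; positivity
  have h1 : HasDerivAt (fun T' : ℝ => R * T') R T := by
    simpa using (hasDerivAt_id T).const_mul R
  have h2 : HasDerivAt (fun T' : ℝ => 4 * a * P / (R * T'))
      ((0 * (R * T) - (4 * a * P) * R) / (R * T) ^ 2) T :=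
    (hasDerivAt_const T (4 * a * P)).div h1 hRT
  have h3 : HasDerivAt (fun T' : ℝ => 1 + 4 * a * P / (R * T'))
      ((0 * (R * T) - (4 * a * P) * R) / (R * T) ^ 2) T := h2.const_add 1
  have h4 : HasDerivAt (fun T' : ℝ => Real.sqrt (1 + 4 * a * P / (R * T')))
      ((0 * (R * T) - (4 * a * P) * R) / (R * T) ^ 2 /
        (2 * Real.sqrt (1 + 4 * a * P / (R * T)))) T := h3.sqrt hSne
  have h5 : HasDerivAt (fun T' : ℝ => -1 + Real.sqrt (1 + 4 * a * P / (R * T')))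
      ((0 * (R * T) - (4 * a * P) * R) / (R * T) ^ 2 /
        (2 * Real.sqrt (1 + 4 * a * P / (R * T)))) T := h4.const_add (-1)
  have h6 : HasDerivAt
      (fun T' : ℝ => 2 * a * P / (-1 + Real.sqrt (1 + 4 * a * P / (R * T'))))
      ((0 * (-1 + Real.sqrt (1 + 4 * a * P / (R * T))) -
          (2 * a * P) * ((0 * (R * T) - (4 * a * P) * R) / (R * T) ^ 2 /
            (2 * Real.sqrt (1 + 4 * a * P / (R * T))))) /
        (-1 + Real.sqrt (1 + 4 * a * P / (R * T))) ^ 2) T :=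
    (hasDerivAt_const T (2 * a * P)).div h5 hdne
  have h7 : HasDerivAt (fun T' : ℝ => Cv * T') Cv T := by
    simpa using (hasDerivAt_id T).const_mul Cv
  have h8 : deriv (fun T' : ℝ =>
      Cv * T' + 2 * a * P / (-1 + Real.sqrt (1 + 4 * a * P / (R * T'))) + q) T = _ :=
    ((h7.add h6).add_const q).deriv
  rw [h8, hsq, show (-1:ℝ) + (1 + 2 * a * ρ) = 2 * a * ρ from by ring, hEOS]
  have h1ρ : (0:ℝ) < 1 + 2 * a * ρ := by positivity
  field_simp
  ring
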